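/- Let P = ((V,E),(V₁,V_R)) be an MDP skeleton, let X be a MEC of P, and let T ⊆ V. Then there exists an end-component Y of P with Y ⊆ X and Y ∩ T = ∅ if and only if Attr(P[X], T ∩ X) ≠ X. -/

import Mathlib

/-- The subgraph induced on `X` is strongly connected. -/
def SCOn {V : Type*} (E : V → V → Prop) (X : Set V) : Prop :=
  ∀ u ∈ X, ∀ v ∈ X, Relation.ReflTransGen (fun a b => a ∈ X ∧ b ∈ X ∧ E a b) u v

/-- `X` is an end-component of the MDP skeleton with edges `E`, random vertices `VR`. -/
def IsEC {V : Type*} (E : V → V → Prop) (VR X : Set V) : Prop :=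
  SCOn E X ∧ (∃ a ∈ X, ∃ b ∈ X, E a b) ∧ ∀ v ∈ X ∩ VR, ∀ w, E v w → w ∈ X

/-- `X` is a maximal end-component (MEC). -/
def IsMEC {V : Type*} (E : V → V → Prop) (VR X : Set V) : Prop :=
  IsEC E VR X ∧ ∀ Y, IsEC E VR Y → X ⊆ Y → Y = X

/-- The random attractor of `W` computed in the sub-MDP `P[S]`. -/
inductive AttrIn {V : Type*} (E : V → V → Prop) (VR S W : Set V) : V → Prop
  | base {v : V} : v ∈ S → v ∈ W → AttrIn E VR S W v
  | rand {v w : V} : v ∈ S → v ∈ VR → w ∈ S → E v w → AttrIn E VR S W w →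
      AttrIn E VR S W v
  | play {v : V} : v ∈ S → v ∉ VR → (∀ w ∈ S, E v w → AttrIn E VR S W w) →
      AttrIn E VR S W v

/-- In any set that is strongly connected and has an edge, every vertex has a
successor inside the set. -/
lemma ec_succ {V : Type*} (E : V → V → Prop) (Y : Set V) (hSC : SCOn E Y)
    (hE : ∃ a ∈ Y, ∃ b ∈ Y, E a b) : ∀ v ∈ Y, ∃ w ∈ Y, E v w := by
  obtain ⟨a, ha, b, hb, hab⟩ := hE
  intro v hv
  rcases (hSC v hv a ha).cases_head with heq | ⟨w, hstep, _⟩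
  · subst heq; exact ⟨b, hb, hab⟩
  · exact ⟨w, hstep.2.1, hstep.2.2⟩

theorem stmt15 {V : Type*} [Fintype V] (E : V → V → Prop) (VR X T : Set V)
    (hMEC : IsMEC E VR X) :
    (∃ Y : Set V, IsEC E VR Y ∧ Y ⊆ X ∧ Y ∩ T = ∅) ↔
      {v | AttrIn E VR X (T ∩ X) v} ≠ X := by
  classical
  obtain ⟨⟨hSC, hEdge, hRand⟩, _hMax⟩ := hMEC
  constructor
  · rintro ⟨Y, ⟨hYsc, hYE, hYR⟩, hYX, hYT⟩
    have key : ∀ v, AttrIn E VR X (T ∩ X) v → v ∉ Y := by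
      intro v hv
      induction hv with
      | @base v hvX hvT =>
        intro hvY
        have : v ∈ Y ∩ T := ⟨hvY, hvT.1⟩
        rw [hYT] at this
        exact this
      | @rand v w hvX hvVR hwX hvw hw ih =>
        intro hvY
        exact ih (hYR _ ⟨hvY, hvVR⟩ _ hvw)
      | @play v hvX hvVR hall ih =>
        intro hvY
        obtain ⟨w, hwY, hvw⟩ := ec_succ E Y hYsc hYE v hvY
        exact ih w (hYX hwY) hvw hwY
    obtain ⟨a, haY, _, _, _⟩ := hYE
    intro hEq
    have haA : a ∈ {v | AttrIn E VR X (T ∩ X) v} := by rw [hEq]; exact hYX haY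
    exact key a haA haY
  · intro hne
    set A : Set V := {v | AttrIn E VR X (T ∩ X) v} with hA
    have hAX : A ⊆ X := by
      intro v hv
      cases hv with
      | base h _ => exact h
      | rand h _ _ _ _ => exact h
      | play h _ _ => exact h
    set B : Set V := X \ A with hB
    have hBne : B.Nonempty := by
      rcases Set.eq_empty_or_nonempty B with h | h
      · exact absurd (Set.Subset.antisymm hAX
          (fun x hx => by_contra fun hxA =>
            (Set.eq_empty_iff_forall_notMem.mp h x) ⟨hx, hxA⟩)) hne
      · exact h
    have hsucc : ∀ v ∈ B, ∃ w ∈ B, E v w := by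
      rintro v ⟨hvX, hvA⟩
      by_cases hvVR : v ∈ VR
      · obtain ⟨w, hwX, hvw⟩ := ec_succ E X hSC hEdge v hvX
        refine ⟨w, ⟨hwX, fun hwA => hvA ?_⟩, hvw⟩
        exact AttrIn.rand hvX hvVR hwX hvw hwA
      · by_contra hcon
        push_neg at hcon
        refine hvA (AttrIn.play hvX hvVR ?_)
        intro w hwX hvw
        by_contra hwA
        exact hcon w ⟨hwX, hwA⟩ hvw
    -- family of nonempty closed subsets of B
    set S : Set (Set V) :=
      {C | C ⊆ B ∧ C.Nonempty ∧ ∀ v ∈ C, ∀ w ∈ B, E v w → w ∈ C} with hSdef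
    have hBS : B ∈ S := ⟨Set.Subset.rfl, hBne, fun _ _ w hw _ => hw⟩
    obtain ⟨Y, ⟨hYB, ⟨u0, hu0⟩, hYcl⟩, hYmin⟩ :=
      (by
        obtain ⟨Y, hY, hmin⟩ := Set.Finite.exists_minimalFor id S (Set.toFinite S) ⟨B, hBS⟩
        exact ⟨Y, hY, fun R hR h => Set.Subset.antisymm (hmin hR h) h⟩ :
        ∃ Y, Y ∈ S ∧ ∀ R ∈ S, id R ≤ id Y → id Y = id R)
    have hSCY : SCOn E Y := by
      intro u hu v hv
      set R : Set V :=
        {x | x ∈ Y ∧ Relation.ReflTransGen (fun a b => a ∈ Y ∧ b ∈ Y ∧ E a b) u x}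
        with hRdef
      have hRS : R ∈ S := by
        refine ⟨fun x hx => hYB hx.1, ⟨u, hu, Relation.ReflTransGen.refl⟩, ?_⟩
        rintro x ⟨hxY, hreach⟩ w hwB hxw
        have hwY := hYcl x hxY w hwB hxw
        exact ⟨hwY, hreach.tail ⟨hxY, hwY, hxw⟩⟩
      have hRY : R = Y := (hYmin R hRS (fun x hx => hx.1)).symm
      have : v ∈ R := hRY ▸ hv
      exact this.2
    have hedgeY : ∃ a ∈ Y, ∃ b ∈ Y, E a b := by
      obtain ⟨w, hwB, hw⟩ := hsucc u0 (hYB hu0)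
      exact ⟨u0, hu0, w, hYcl u0 hu0 w hwB hw, hw⟩
    have hrandY : ∀ v ∈ Y ∩ VR, ∀ w, E v w → w ∈ Y := by
      rintro v ⟨hvY, hvVR⟩ w hvw
      have hvB := hYB hvY
      have hwX : w ∈ X := hRand v ⟨hvB.1, hvVR⟩ w hvw
      have hwA : w ∉ A := fun hwA => hvB.2 (AttrIn.rand hvB.1 hvVR hwX hvw hwA)
      exact hYcl v hvY w ⟨hwX, hwA⟩ hvw
    refine ⟨Y, ⟨hSCY, hedgeY, hrandY⟩, fun v hv => (hYB hv).1, ?_⟩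
    apply Set.eq_empty_iff_forall_notMem.mpr
    rintro v ⟨hvY, hvT⟩
    exact (hYB hvY).2 (AttrIn.base (hYB hvY).1 ⟨hvT, (hYB hvY).1⟩)
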